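/- For every k = (k_1,...,k_s) with 1 ≤ k_i ≤ m, every integer N_1 ≥ 0 and every integer N_2 ∈ [0, B_{τ·k}), one has Σ_{n = ỹ_m + N_1 B_{τ·k}}^{ỹ_m + N_1 B_{τ·k} + N_2 − 1} (χ_{P_k}(H_s(n)) − B_{τ·k}^{−1}) = χ_{[0,N_2)}(A_k) − N_2 B_{τ·k}^{−1}. -/

import Mathlib

open Finset

open scoped Classical

/-- The radical inverse function in base `b`: `φ_b(n) = Σ_j n_j b^{-j-1}`. -/
noncomputable def radInv (b n : ℕ) : ℝ :=
  ∑' j : ℕ, ((n / b ^ j % b : ℕ) : ℝ) / (b : ℝ) ^ (j + 1)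

/-- The axis-parallel box `[0, y) = ∏_i [0, y_i)`. -/
def box {s : ℕ} (y : Fin s → ℝ) : Set (Fin s → ℝ) :=
  Set.univ.pi fun i => Set.Ico 0 (y i)

/-- The discrepancy function `Δ(y, (x_n)_{n=a}^{a+N-1})`. -/
noncomputable def disc {s : ℕ} (x : ℕ → Fin s → ℝ) (a N : ℕ) (y : Fin s → ℝ) : ℝ :=
  ∑ n ∈ Finset.Ico a (a + N),
    ((box y).indicator (fun _ => (1 : ℝ)) (x n) - ∏ i, y i)

/-- The star discrepancy of `(x_n)_{n=a}^{a+N-1}`. -/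
noncomputable def Dstar {s : ℕ} (x : ℕ → Fin s → ℝ) (a N : ℕ) : ℝ :=
  sSup {v : ℝ | ∃ y : Fin s → ℝ, (∀ i, y i ∈ Set.Ico (0 : ℝ) 1) ∧
    v = |disc x a N y| / (N : ℝ)}

/-- `(x_n)_{0 ≤ n < b^m}` is a `(t,m,s)`-net in base `b`. -/
def IsNet {s : ℕ} (b t m : ℕ) (x : ℕ → Fin s → ℝ) : Prop :=
  (∀ n < b ^ m, ∀ i, x n i ∈ Set.Ico (0 : ℝ) 1) ∧
  ∀ d a : Fin s → ℕ, (∀ i, a i < b ^ d i) → (∑ i, d i) + t = m →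
    ((Finset.range (b ^ m)).filter
      (fun n => ∀ i, x n i ∈ Set.Ico ((a i : ℝ) / b ^ d i) ((a i + 1 : ℝ) / b ^ d i))).card
      = b ^ t

/-- The `j`-th `b`-adic digit (`j ≥ 1`) of a real number `x ∈ [0,1)`. -/
noncomputable def bdigit (b : ℕ) (x : ℝ) (j : ℕ) : ℕ := (⌊x * (b : ℝ) ^ j⌋ % (b : ℤ)).toNat % b

/-- The `b`-adic absolute valuation `‖x‖_b = b^{-(k+1)}` where the digits
`x_1, …, x_k` vanish and `x_{k+1} ≠ 0`; it is `0` when all digits vanish. -/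
noncomputable def bval (b : ℕ) (x : ℝ) : ℝ :=
  if h : ∃ j, 1 ≤ j ∧ bdigit b x j ≠ 0 then
    (1 : ℝ) / (b : ℝ) ^ sInf {j | 1 ≤ j ∧ bdigit b x j ≠ 0}
  else 0

/-- The `b`-adic absolute valuation of a vector, `‖x‖_b = ∏_j ‖x^{(j)}‖_b`. -/
noncomputable def bvalVec {s : ℕ} (b : ℕ) (x : Fin s → ℝ) : ℝ := ∏ i, bval b (x i)

/-- Digitwise subtraction modulo `b`: `x ⊖ σ`. -/
noncomputable def bsub (b : ℕ) (x σ : ℝ) : ℝ :=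
  ∑' j : ℕ, (((bdigit b x (j + 1) + b - bdigit b σ (j + 1)) % b : ℕ) : ℝ) / (b : ℝ) ^ (j + 1)

/-- Digitwise addition modulo `b`: `x ⊕ σ`. -/
noncomputable def badd (b : ℕ) (x σ : ℝ) : ℝ :=
  ∑' j : ℕ, (((bdigit b x (j + 1) + bdigit b σ (j + 1)) % b : ℕ) : ℝ) / (b : ℝ) ^ (j + 1)

/-- A `b^m`-point set in `[0,1)^s` is `d`-admissible in base `b`. -/
def IsAdmissible {s : ℕ} (b m : ℕ) (d : ℤ) (x : ℕ → Fin s → ℝ) : Prop :=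
  ∀ k n : ℕ, k < n → n < b ^ m →
    bvalVec b (fun i => bsub b (x n i) (x k i)) > (b : ℝ) ^ (-((m : ℤ) + d))

/-- The two-dimensional Halton sequence in bases `2` and `3`. -/
noncomputable def H23 : ℕ → Fin 2 → ℝ := fun n => ![radInv 2 n, radInv 3 n]

/-- `ytil` is the quantity `ỹ_m` for the Halton sequence in bases `2` and `3`
(so that `τ₁ = 2`, `τ₂ = 1`). -/
def IsYtilde (m ytil : ℕ) : Prop :=
  ytil < 2 ^ (2 * (m + 1)) * 3 ^ (m + 1) ∧
  ∃ M₁ M₂ : ℤ,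
    M₁ * 3 ^ (m + 1) ≡ 1 [ZMOD (2 : ℤ) ^ (2 * (m + 1))] ∧
    M₂ * 2 ^ (2 * (m + 1)) ≡ 1 [ZMOD (3 : ℤ) ^ (m + 1)] ∧
    (ytil : ℤ) ≡ M₁ * 3 ^ (m + 1) * (∑ j ∈ Finset.Icc 1 (m + 1), (2 : ℤ) ^ (2 * j - 1))
        + M₂ * 2 ^ (2 * (m + 1)) * (∑ j ∈ Finset.Icc 1 (m + 1), (3 : ℤ) ^ (j - 1))
      [ZMOD (2 : ℤ) ^ (2 * (m + 1)) * 3 ^ (m + 1)]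

lemma radInv_eq_sum {b n J : ℕ} (hb : 2 ≤ b) (hn : n < b ^ J) :
    radInv b n = ∑ j ∈ Finset.range J, ((n / b ^ j % b : ℕ) : ℝ) / (b : ℝ) ^ (j + 1) := by
  apply tsum_eq_sum
  intro j hj
  have hj' : J ≤ j := by simpa using hj
  have : n < b ^ j := lt_of_lt_of_le hn (Nat.pow_le_pow_right (by omega) hj')
  rw [Nat.div_eq_of_lt this]
  simp

lemma radInv_zero (b : ℕ) : radInv b 0 = 0 := by simp [radInv]

lemma radInv_step {b : ℕ} (hb : 2 ≤ b) (n : ℕ) :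
    radInv b n = ((n % b : ℕ) : ℝ) / b + radInv b (n / b) / b := by
  have h1 : n < b ^ (n + 1) := lt_of_lt_of_le (Nat.lt_pow_self (by omega) : n < b ^ n)
    (Nat.pow_le_pow_right (by omega) (by omega))
  have h2 : n / b < b ^ n :=
    lt_of_le_of_lt (Nat.div_le_self n b) (Nat.lt_pow_self (by omega) : n < b ^ n)
  rw [radInv_eq_sum hb h1, radInv_eq_sum hb h2, Finset.sum_range_succ']
  have hb0 : (b : ℝ) ≠ 0 := by positivity
  rw [Finset.sum_div, add_comm]
  congr 1
  · simp
  · apply Finset.sum_congr rfl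
    intro j _
    have : n / b ^ (j + 1) = n / b / b ^ j := by
      rw [Nat.div_div_eq_div_mul, ← pow_succ']
    rw [this, div_div, ← pow_succ]

def rev (b : ℕ) : ℕ → ℕ → ℕ
  | 0, _ => 0
  | (D+1), a => a % b * b ^ D + rev b D (a / b)

lemma radInv_split {b : ℕ} (hb : 2 ≤ b) (D n : ℕ) :
    radInv b n = (rev b D (n % b ^ D) : ℝ) / (b : ℝ) ^ D + radInv b (n / b ^ D) / (b : ℝ) ^ D := by
  induction D generalizing n with
  | zero => simp [rev]
  | succ D ih =>
    have hb0 : (b : ℝ) ≠ 0 := by positivity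
    rw [radInv_step hb n, ih (n / b)]
    have e1 : n % b ^ (D+1) % b = n % b := Nat.mod_mod_of_dvd n (dvd_pow_self b (by omega))
    have e2 : n % b ^ (D+1) / b = n / b % b ^ D := by
      rw [pow_succ']
      exact Nat.mod_mul_right_div_self n b (b ^ D)
    have e3 : n / b / b ^ D = n / b ^ (D+1) := by
      rw [Nat.div_div_eq_div_mul, ← pow_succ']
    rw [show rev b (D+1) (n % b ^ (D+1)) = n % b ^ (D+1) % b * b ^ D
        + rev b D (n % b ^ (D+1) / b) from rfl, e1, e2, e3]
    push_cast
    field_simp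
    ring

lemma div_lt_pow_of_lt' {b D a : ℕ} (hb : 0 < b) (ha : a < b ^ (D+1)) : a / b < b ^ D := by
  rw [Nat.div_lt_iff_lt_mul hb]
  calc a < b ^ (D+1) := ha
  _ = b ^ D * b := pow_succ b D

lemma rev_lt' {b : ℕ} (hb : 2 ≤ b) : ∀ D a, a < b ^ D → rev b D a < b ^ D := by
  intro D
  induction D with
  | zero => intro a ha; simpa [rev] using ha
  | succ D ih =>
    intro a ha
    have h1 : a % b ≤ b - 1 := Nat.le_sub_one_of_lt (Nat.mod_lt _ (by omega))
    have h2 : rev b D (a / b) < b ^ D := ih _ (div_lt_pow_of_lt' (by omega) ha)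
    have h3 : a % b * b ^ D ≤ (b - 1) * b ^ D := Nat.mul_le_mul_right _ h1
    have h4 : (b - 1) * b ^ D + b ^ D = b ^ (D+1) := by
      have : (b - 1) * b ^ D + b ^ D = ((b-1)+1) * b ^ D := by ring
      rw [this]; rw [pow_succ]; rw [Nat.sub_add_cancel (by omega)]; ring
    rw [rev]; omega

lemma rev_inj' {b : ℕ} (hb : 2 ≤ b) : ∀ D a a', a < b ^ D → a' < b ^ D →
    rev b D a = rev b D a' → a = a' := by
  intro D
  induction D with
  | zero => intro a a' ha ha' _; simp at ha ha'; omega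
  | succ D ih =>
    intro a a' ha ha' h
    rw [rev, rev] at h
    have h2 : rev b D (a / b) < b ^ D := rev_lt' hb _ _ (div_lt_pow_of_lt' (by omega) ha)
    have h2' : rev b D (a' / b) < b ^ D := rev_lt' hb _ _ (div_lt_pow_of_lt' (by omega) ha')
    have hm : a % b = a' % b := by
      by_contra hne
      rcases Nat.lt_or_ge (a % b) (a' % b) with hlt | hlt
      · have := Nat.mul_le_mul_right (b ^ D) (Nat.succ_le_of_lt hlt)
        rw [Nat.succ_mul] at this; omega
      · have hlt : a' % b < a % b := by omega
        have := Nat.mul_le_mul_right (b ^ D) (Nat.succ_le_of_lt hlt)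
        rw [Nat.succ_mul] at this; omega
    have hd : a / b = a' / b :=
      ih _ _ (div_lt_pow_of_lt' (by omega) ha) (div_lt_pow_of_lt' (by omega) ha')
        (by rw [hm] at h; omega)
    rw [← Nat.div_add_mod a b, ← Nat.div_add_mod a' b, hd, hm]

lemma radInv_nonneg (b n : ℕ) : 0 ≤ radInv b n :=
  tsum_nonneg fun j => by positivity

lemma radInv_of_lt {b n D : ℕ} (hb : 2 ≤ b) (hn : n < b ^ D) :
    radInv b n = (rev b D n : ℝ) / (b : ℝ) ^ D := by
  have := radInv_split hb D n
  rw [Nat.mod_eq_of_lt hn, Nat.div_eq_of_lt hn, radInv_zero] at this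
  simpa using this

lemma radInv_lt_one {b : ℕ} (hb : 2 ≤ b) (n : ℕ) : radInv b n < 1 := by
  obtain ⟨D, hD⟩ : ∃ D, n < b ^ D := ⟨n, (Nat.lt_pow_self (by omega) : n < b ^ n)⟩
  rw [radInv_of_lt hb hD]
  have h1 : (rev b D n : ℝ) < (b : ℝ) ^ D := by
    exact_mod_cast (by exact_mod_cast rev_lt' hb D n hD : (rev b D n : ℝ) < ((b ^ D : ℕ) : ℝ))
  have h2 : (0:ℝ) < (b:ℝ) ^ D := by positivity
  rw [div_lt_one h2]
  exact h1

/-- Main membership criterion. -/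
lemma radInv_mem_iff {b n D e : ℕ} (hb : 2 ≤ b) (he : e < b ^ D) :
    radInv b n ∈ Set.Ico (radInv b e) (radInv b e + ((b:ℝ) ^ D)⁻¹) ↔ n % b ^ D = e := by
  have hbD : (0:ℝ) < (b:ℝ) ^ D := by positivity
  have hsplit := radInv_split hb D n
  have hfrac0 : 0 ≤ radInv b (n / b ^ D) := radInv_nonneg _ _
  have hfrac1 : radInv b (n / b ^ D) < 1 := radInv_lt_one hb _
  have hE : radInv b e = (rev b D e : ℝ) / (b:ℝ) ^ D := radInv_of_lt hb he
  set r := rev b D (n % b ^ D) with hr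
  set re := rev b D e with hre
  have hlow : (r : ℝ) / (b:ℝ)^D ≤ radInv b n := by
    rw [hsplit]; nlinarith [div_nonneg hfrac0 hbD.le]
  have hhigh : radInv b n < ((r : ℝ) + 1) / (b:ℝ)^D := by
    rw [hsplit, ← add_div, div_lt_div_iff_of_pos_right hbD]
    linarith
  constructor
  · rintro ⟨h1, h2⟩
    rw [hE] at h1 h2
    have e2 : (re:ℝ)/(b:ℝ)^D + ((b:ℝ)^D)⁻¹ = ((re:ℝ)+1)/(b:ℝ)^D := by field_simp
    rw [e2] at h2
    have i1 : (re:ℝ) < (r:ℝ) + 1 :=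
      (div_lt_div_iff_of_pos_right hbD).mp (lt_of_le_of_lt h1 hhigh)
    have i2 : (r:ℝ) < (re:ℝ) + 1 :=
      (div_lt_div_iff_of_pos_right hbD).mp (lt_of_le_of_lt hlow h2)
    have i1' : re < r + 1 := by exact_mod_cast i1
    have i2' : r < re + 1 := by exact_mod_cast i2
    have hrre : r = re := by omega
    exact rev_inj' hb D _ _ (Nat.mod_lt _ (Nat.pow_pos (by omega))) he
      (by rw [← hr, ← hre, hrre])
  · intro h
    have hrre : r = re := by rw [hr, hre, h]
    rw [hE, ← hrre]
    refine ⟨hlow, ?_⟩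
    have e2 : (r:ℝ)/(b:ℝ)^D + ((b:ℝ)^D)⁻¹ = ((r:ℝ)+1)/(b:ℝ)^D := by field_simp
    rw [e2]
    exact hhigh

lemma radInv_add {b a p q : ℕ} (hb : 2 ≤ b) (ha : a < b ^ p) :
    radInv b (a + b ^ p * q) = radInv b a + radInv b q / (b:ℝ) ^ p := by
  have h1 := radInv_split hb p (a + b ^ p * q)
  have e1 : (a + b ^ p * q) % b ^ p = a := by
    rw [Nat.add_mul_mod_self_left, Nat.mod_eq_of_lt ha]
  have e2 : (a + b ^ p * q) / b ^ p = q := by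
    rw [Nat.add_mul_div_left _ _ (Nat.pow_pos (by omega)), Nat.div_eq_of_lt ha, zero_add]
  rw [e1, e2] at h1
  rw [h1, radInv_of_lt hb ha]

lemma radInv_one {b : ℕ} (hb : 2 ≤ b) : radInv b 1 = 1 / (b:ℝ) := by
  have h1 : 1 < b ^ 1 := by rw [pow_one]; omega
  rw [radInv_of_lt hb h1]
  have : rev b 1 1 = 1 := by
    show 1 % b * b ^ 0 + rev b 0 (1 / b) = 1
    rw [Nat.mod_eq_of_lt (by omega), Nat.div_eq_of_lt (by omega)]
    simp [rev]
  rw [this]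
  norm_num

lemma radInv_pow {b t : ℕ} (hb : 2 ≤ b) :
    radInv b (b ^ t) = ((b:ℝ) ^ (t+1))⁻¹ := by
  have := radInv_add (a := 0) (p := t) (q := 1) hb (Nat.pow_pos (by omega))
  rw [mul_one, zero_add] at this
  rw [this, radInv_zero, radInv_one hb, zero_add, pow_succ]
  field_simp

/-- The special residue `E b τ t = Σ_{j=1}^t b^(jτ-1)`. -/
lemma radInv_E {b τ : ℕ} (hb : 2 ≤ b) (hτ : 1 ≤ τ) : ∀ t : ℕ,
    (∑ j ∈ Finset.Icc 1 t, b ^ (j * τ - 1)) < b ^ (τ * t) ∧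
    radInv b (∑ j ∈ Finset.Icc 1 t, b ^ (j * τ - 1))
      = ∑ j ∈ Finset.Icc 1 t, ((b:ℝ) ^ (j * τ))⁻¹ := by
  intro t
  induction t with
  | zero => simp [radInv_zero]
  | succ t ih =>
    obtain ⟨ih1, ih2⟩ := ih
    have hsum : ∑ j ∈ Finset.Icc 1 (t+1), b ^ (j * τ - 1)
        = (∑ j ∈ Finset.Icc 1 t, b ^ (j * τ - 1)) + b ^ (τ * t) * b ^ (τ - 1) := by
      rw [Finset.sum_Icc_succ_top (by omega), ← pow_add]
      congr 2
      rw [Nat.add_mul, one_mul, Nat.mul_comm t τ]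
      omega
    have hb1 : b ^ (τ - 1) < b ^ τ := Nat.pow_lt_pow_right (by omega) (by omega)
    constructor
    · rw [hsum]
      have h2 : b ^ (τ * t) * b ^ (τ - 1) + b ^ (τ * t) * b ^ (τ - 1) ≤ b ^ (τ * (t+1)) := by
        have : b ^ (τ * (t+1)) = b ^ (τ * t) * (b ^ (τ - 1) * b) := by
          rw [← pow_succ, Nat.mul_add, mul_one, pow_add]
          congr 2
          omega
        rw [this]
        calc b ^ (τ * t) * b ^ (τ - 1) + b ^ (τ * t) * b ^ (τ - 1)
            = b ^ (τ * t) * b ^ (τ - 1) * 2 := by ring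
        _ ≤ b ^ (τ * t) * b ^ (τ - 1) * b := Nat.mul_le_mul_left _ hb
        _ = b ^ (τ * t) * (b ^ (τ - 1) * b) := by ring
      have h3 : (∑ j ∈ Finset.Icc 1 t, b ^ (j * τ - 1)) < b ^ (τ * t) * b ^ (τ - 1) :=
        lt_of_lt_of_le ih1 (by
          have h4 : 1 ≤ b ^ (τ - 1) := Nat.one_le_pow _ _ (by omega)
          nlinarith [(Nat.pow_pos (show 0 < b by omega) : 0 < b ^ (τ * t))])
      omega
    · rw [hsum, radInv_add hb ih1, ih2, radInv_pow hb,
        Finset.sum_Icc_succ_top (show 1 ≤ t+1 by omega)]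
      congr 1
      have hexp : (t+1) * τ = (τ - 1 + 1) + τ * t := by
        rw [Nat.add_mul, one_mul, Nat.mul_comm t τ]
        omega
      rw [hexp, pow_add, pow_add, mul_inv, mul_inv, div_eq_mul_inv, pow_one, pow_succ, mul_inv]

lemma modEq_prod_of_forall {ι : Type*} [Fintype ι] [DecidableEq ι] (f : ι → ℤ)
    (hco : ∀ i j, i ≠ j → IsCoprime (f i) (f j)) {a c : ℤ}
    (h : ∀ i, a ≡ c [ZMOD f i]) : a ≡ c [ZMOD ∏ i, f i] := by
  rw [Int.modEq_iff_dvd]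
  exact Finset.prod_dvd_of_coprime
    (fun i _ j _ hij => hco i j hij)
    (fun i _ => (Int.modEq_iff_dvd.mp (h i)))

lemma sum_modEq_single {ι : Type*} [Fintype ι] [DecidableEq ι] (q : ℤ) (T : ι → ℤ) (i : ι)
    (h : ∀ i', i' ≠ i → q ∣ T i') : (∑ i', T i') ≡ T i [ZMOD q] := by
  rw [Int.modEq_iff_dvd]
  have hs : T i - ∑ i', T i' = -∑ i' ∈ Finset.univ.erase i, T i' := by
    rw [← Finset.add_sum_erase _ T (Finset.mem_univ i)]
    ring
  rw [hs, dvd_neg]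
  exact Finset.dvd_sum fun i' hi' => h i' (Finset.mem_erase.mp hi').1

lemma modEq_of_eq_mod {n : ℕ} {a e M : ℕ} (he : e < M) :
    a % M = e ↔ (a : ℤ) ≡ (e : ℤ) [ZMOD (M : ℤ)] := by
  rw [Int.natCast_modEq_iff]
  unfold Nat.ModEq
  rw [Nat.mod_eq_of_lt he]

lemma modEq_pow_iff {a e bb D : ℕ} (he : e < bb ^ D) :
    a % bb ^ D = e ↔ (a : ℤ) ≡ (e : ℤ) [ZMOD (bb : ℤ) ^ D] := by
  have hc : ((bb : ℤ) ^ D) = ((bb ^ D : ℕ) : ℤ) := by push_cast; ring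
  rw [hc, Int.natCast_modEq_iff]
  unfold Nat.ModEq
  rw [Nat.mod_eq_of_lt he]

/-- The partial block sums of the centred counting function of `P_k`, started at
`ỹ_m`, are given by `χ_{[0,N₂)}(A_k) − N₂/B_{τ·k}`. -/
theorem halton_Pk_partial_sum (s m : ℕ) (hs : 1 ≤ s) (b : Fin s → ℕ) (hb : ∀ i, 2 ≤ b i)
    (hcop : ∀ i j, i ≠ j → Nat.Coprime (b i) (b j))
    (τ : Fin s → ℕ)
    (hτ : ∀ i, τ i = sInf {l : ℕ | 1 ≤ l ∧ l < (∏ j ∈ Finset.univ.erase i, b j) ∧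
      b i ^ l % (∏ j ∈ Finset.univ.erase i, b j) = 1})
    (hτpos : ∀ i, 1 ≤ τ i)
    (k : Fin s → ℕ) (hk : ∀ i, 1 ≤ k i ∧ k i ≤ m)
    (M : Fin s → ℤ)
    (hM : ∀ i, M i * ∏ j ∈ Finset.univ.erase i, (b j : ℤ) ^ (τ j * k j) ≡ 1
      [ZMOD ((b i : ℤ) ^ (τ i * k i))])
    (A : ℕ) (hA : A < ∏ i, b i ^ (τ i * k i))
    (hA2 : (A : ℤ) ≡ -∑ i, M i * ((b i : ℤ) ^ (τ i * k i - 1) *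
        ∏ j ∈ Finset.univ.erase i, (b j : ℤ) ^ (τ j * k j))
      [ZMOD (∏ i, (b i : ℤ) ^ (τ i * k i))])
    (M' : Fin s → ℤ)
    (hM' : ∀ i, M' i * ∏ j ∈ Finset.univ.erase i, (b j : ℤ) ^ (τ j * (m + 1)) ≡ 1
      [ZMOD ((b i : ℤ) ^ (τ i * (m + 1)))])
    (ytil : ℕ) (hy : ytil < ∏ i, b i ^ (τ i * (m + 1)))
    (hy2 : (ytil : ℤ) ≡ ∑ i, M' i * (∏ j ∈ Finset.univ.erase i, (b j : ℤ) ^ (τ j * (m + 1))) *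
        (∑ j ∈ Finset.Icc 1 (m + 1), (b i : ℤ) ^ (j * τ i - 1))
      [ZMOD (∏ i, (b i : ℤ) ^ (τ i * (m + 1)))])
    (N₁ N₂ : ℕ) (hN₂ : N₂ < ∏ i, b i ^ (τ i * k i)) :
    ∑ n ∈ Finset.Ico (ytil + N₁ * ∏ i, b i ^ (τ i * k i))
        (ytil + N₁ * (∏ i, b i ^ (τ i * k i)) + N₂),
      ((Set.univ.pi (fun i =>
          Set.Ico ((∑ j ∈ Finset.Icc 1 (k i), ((b i : ℝ) ^ (j * τ i))⁻¹)
              - ((b i : ℝ) ^ (τ i * k i))⁻¹)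
            (∑ j ∈ Finset.Icc 1 (k i), ((b i : ℝ) ^ (j * τ i))⁻¹))).indicator
          (fun _ => (1 : ℝ)) (fun i => radInv (b i) n)
        - (((∏ i, b i ^ (τ i * k i) : ℕ) : ℝ))⁻¹)
      = (if A < N₂ then (1 : ℝ) else 0) - (N₂ : ℝ) * (((∏ i, b i ^ (τ i * k i) : ℕ) : ℝ))⁻¹ := by
  -- notation
  set B : ℕ := ∏ i, b i ^ (τ i * k i) with hB
  set e : Fin s → ℕ := fun i => ∑ j ∈ Finset.Icc 1 (k i - 1), b i ^ (j * τ i - 1) with he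
  set start : ℕ := ytil + N₁ * B with hstart
  have hBz : (B : ℤ) = ∏ i, (b i : ℤ) ^ (τ i * k i) := by rw [hB]; push_cast; ring
  have hBpos : 0 < B := Finset.prod_pos fun i _ => Nat.pow_pos (by have := hb i; omega)
  -- step 1: ytil ≡ Σ_{j=1}^{m+1} b_i^{jτ_i-1}  mod b_i^{τ_i(m+1)}
  have hyt : ∀ i, (ytil : ℤ) ≡ ∑ j ∈ Finset.Icc 1 (m+1), (b i : ℤ) ^ (j * τ i - 1)
      [ZMOD (b i : ℤ) ^ (τ i * (m+1))] := by
    intro i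
    have h1 : (b i : ℤ) ^ (τ i * (m+1)) ∣ ∏ i', (b i' : ℤ) ^ (τ i' * (m+1)) :=
      Finset.dvd_prod_of_mem _ (Finset.mem_univ i)
    refine (hy2.of_dvd h1).trans ?_
    refine (sum_modEq_single _ _ i ?_).trans ?_
    · intro i' hne
      refine dvd_mul_of_dvd_left (Dvd.dvd.mul_left ?_ (M' i')) _
      exact Finset.dvd_prod_of_mem _ (Finset.mem_erase.mpr ⟨hne.symm, Finset.mem_univ i⟩)
    · have h2 := (hM' i).mul_right (∑ j ∈ Finset.Icc 1 (m+1), (b i : ℤ) ^ (j * τ i - 1))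
      rw [one_mul] at h2
      exact h2
  -- step 2: reduce modulus and truncate the sum
  have hyt2 : ∀ i, (ytil : ℤ) ≡ ∑ j ∈ Finset.Icc 1 (k i), (b i : ℤ) ^ (j * τ i - 1)
      [ZMOD (b i : ℤ) ^ (τ i * k i)] := by
    intro i
    have hdvd : (b i : ℤ) ^ (τ i * k i) ∣ (b i : ℤ) ^ (τ i * (m+1)) :=
      pow_dvd_pow _ (Nat.mul_le_mul_left _ (by have := (hk i).2; omega))
    refine ((hyt i).of_dvd hdvd).trans ?_
    have hsplit : ∑ j ∈ Finset.Icc 1 (m+1), (b i : ℤ) ^ (j * τ i - 1)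
        = (∑ j ∈ Finset.Icc 1 (k i), (b i : ℤ) ^ (j * τ i - 1))
          + ∑ j ∈ Finset.Ioc (k i) (m+1), (b i : ℤ) ^ (j * τ i - 1) := by
      have h01 : Finset.Icc 1 (m+1) = Finset.Ioc 0 (m+1) := by ext x; simp only [Finset.mem_Icc, Finset.mem_Ioc]; omega
      have h02 : Finset.Icc 1 (k i) = Finset.Ioc 0 (k i) := by ext x; simp only [Finset.mem_Icc, Finset.mem_Ioc]; omega
      rw [h01, h02,
        ← Finset.sum_Ioc_consecutive _ (Nat.zero_le (k i)) (by have := (hk i).2; omega)]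
    rw [hsplit]
    have hz : (∑ j ∈ Finset.Ioc (k i) (m+1), (b i : ℤ) ^ (j * τ i - 1)) ≡ 0
        [ZMOD (b i : ℤ) ^ (τ i * k i)] := by
      rw [Int.modEq_zero_iff_dvd]
      refine Finset.dvd_sum fun j hj => pow_dvd_pow _ ?_
      have hj1 : k i + 1 ≤ j := (Finset.mem_Ioc.mp hj).1
      have h2 : (k i + 1) * τ i ≤ j * τ i := Nat.mul_le_mul_right _ hj1
      have h3 : (k i + 1) * τ i = k i * τ i + τ i := by ring
      have h4 : τ i * k i = k i * τ i := Nat.mul_comm _ _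
      have := hτpos i
      omega
    calc (∑ j ∈ Finset.Icc 1 (k i), (b i : ℤ) ^ (j * τ i - 1))
          + ∑ j ∈ Finset.Ioc (k i) (m+1), (b i : ℤ) ^ (j * τ i - 1)
        ≡ (∑ j ∈ Finset.Icc 1 (k i), (b i : ℤ) ^ (j * τ i - 1)) + 0
          [ZMOD (b i : ℤ) ^ (τ i * k i)] := Int.ModEq.add_left _ hz
      _ = ∑ j ∈ Finset.Icc 1 (k i), (b i : ℤ) ^ (j * τ i - 1) := by ring
  -- step 3: A ≡ -b_i^{τ_i k_i - 1} mod b_i^{τ_i k_i}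
  have hA3 : ∀ i, (A : ℤ) ≡ -(b i : ℤ) ^ (τ i * k i - 1) [ZMOD (b i : ℤ) ^ (τ i * k i)] := by
    intro i
    have h1 : (b i : ℤ) ^ (τ i * k i) ∣ ∏ i', (b i' : ℤ) ^ (τ i' * k i') :=
      Finset.dvd_prod_of_mem _ (Finset.mem_univ i)
    refine (hA2.of_dvd h1).trans (Int.ModEq.neg ?_)
    refine (sum_modEq_single _ _ i ?_).trans ?_
    · intro i' hne
      refine Dvd.dvd.mul_left ?_ (M i')
      refine Dvd.dvd.mul_left ?_ _
      exact Finset.dvd_prod_of_mem _ (Finset.mem_erase.mpr ⟨hne.symm, Finset.mem_univ i⟩)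
    · have h2 := (hM i).mul_right ((b i : ℤ) ^ (τ i * k i - 1))
      rw [one_mul] at h2
      have heq : M i * ((b i : ℤ) ^ (τ i * k i - 1)
            * ∏ j ∈ Finset.univ.erase i, (b j : ℤ) ^ (τ j * k j))
          = M i * (∏ j ∈ Finset.univ.erase i, (b j : ℤ) ^ (τ j * k j))
            * (b i : ℤ) ^ (τ i * k i - 1) := by ring
      rw [heq]
      exact h2
  -- step 4: ytil + A ≡ e i mod b_i^{τ_i k_i}
  have key : ∀ i, ((ytil : ℤ) + A) ≡ (e i : ℤ) [ZMOD (b i : ℤ) ^ (τ i * k i)] := by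
    intro i
    refine ((hyt2 i).add (hA3 i)).trans ?_
    have hki : k i = (k i - 1) + 1 := by have := (hk i).1; omega
    have hsum : ∑ j ∈ Finset.Icc 1 (k i), (b i : ℤ) ^ (j * τ i - 1)
        = (∑ j ∈ Finset.Icc 1 (k i - 1), (b i : ℤ) ^ (j * τ i - 1))
          + (b i : ℤ) ^ (τ i * k i - 1) := by
      conv_lhs => rw [hki]
      rw [Finset.sum_Icc_succ_top (by omega)]
      congr 2
      rw [← hki, Nat.mul_comm]
    have hfin : (∑ j ∈ Finset.Icc 1 (k i), (b i : ℤ) ^ (j * τ i - 1))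
        + -(b i : ℤ) ^ (τ i * k i - 1) = ((e i : ℕ) : ℤ) := by
      rw [hsum]
      simp only [he]
      push_cast
      ring
    rw [hfin]
  -- e i < b_i^{τ_i k_i}
  have heLt : ∀ i, e i < b i ^ (τ i * k i) := by
    intro i
    refine lt_of_lt_of_le (radInv_E (hb i) (hτpos i) (k i - 1)).1 ?_
    exact Nat.pow_le_pow_right (by have := hb i; omega)
      (Nat.mul_le_mul_left _ (by omega))
  -- step 6: the membership criterion
  have hcond : ∀ n : ℕ, ((fun i => radInv (b i) n) ∈ Set.univ.pi (fun i =>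
      Set.Ico ((∑ j ∈ Finset.Icc 1 (k i), ((b i : ℝ) ^ (j * τ i))⁻¹)
          - ((b i : ℝ) ^ (τ i * k i))⁻¹)
        (∑ j ∈ Finset.Icc 1 (k i), ((b i : ℝ) ^ (j * τ i))⁻¹)))
      ↔ ∀ i, n % b i ^ (τ i * k i) = e i := by
    intro n
    rw [Set.mem_univ_pi]
    refine forall_congr' fun i => ?_
    have hre : radInv (b i) (e i) = ∑ j ∈ Finset.Icc 1 (k i - 1), ((b i : ℝ) ^ (j * τ i))⁻¹ :=
      (radInv_E (hb i) (hτpos i) (k i - 1)).2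
    have hki : k i = (k i - 1) + 1 := by have := (hk i).1; omega
    have hS : ∑ j ∈ Finset.Icc 1 (k i), ((b i : ℝ) ^ (j * τ i))⁻¹
        = radInv (b i) (e i) + ((b i : ℝ) ^ (τ i * k i))⁻¹ := by
      conv_lhs => rw [hki]
      rw [Finset.sum_Icc_succ_top (by omega), hre]
      congr 3
      rw [← hki, Nat.mul_comm]
    have hIco : Set.Ico ((∑ j ∈ Finset.Icc 1 (k i), ((b i : ℝ) ^ (j * τ i))⁻¹)
          - ((b i : ℝ) ^ (τ i * k i))⁻¹)
        (∑ j ∈ Finset.Icc 1 (k i), ((b i : ℝ) ^ (j * τ i))⁻¹)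
        = Set.Ico (radInv (b i) (e i)) (radInv (b i) (e i) + ((b i : ℝ) ^ (τ i * k i))⁻¹) := by
      rw [hS]; ring_nf
    rw [hIco]
    exact radInv_mem_iff (hb i) (heLt i)
  -- pairwise coprimality in ℤ
  have hcopZ : ∀ i j, i ≠ j →
      IsCoprime ((b i : ℤ) ^ (τ i * k i)) ((b j : ℤ) ^ (τ j * k j)) := fun i j hij =>
    ((Nat.isCoprime_iff_coprime.mpr (hcop i j hij)).pow)
  -- step 7: characterize membership within the block
  have hchar : ∀ n ∈ Finset.Ico start (start + N₂),
      ((∀ i, n % b i ^ (τ i * k i) = e i) ↔ n = start + A) := by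
    intro n hn
    rw [Finset.mem_Ico] at hn
    constructor
    · intro h
      have h1 : ∀ i, (n : ℤ) ≡ ((ytil : ℤ) + A) [ZMOD (b i : ℤ) ^ (τ i * k i)] :=
        fun i => ((modEq_pow_iff (heLt i)).mp (h i)).trans (key i).symm
      have h2 : (n : ℤ) ≡ ((ytil : ℤ) + A) [ZMOD ((B : ℕ) : ℤ)] := by
        rw [hBz]; exact modEq_prod_of_forall _ hcopZ h1
      have h5 : ((B : ℕ) : ℤ) ∣ ((ytil : ℤ) + A) - n := Int.modEq_iff_dvd.mp h2
      have h5' : ((B : ℕ) : ℤ) ∣ ((start : ℕ) : ℤ) + A - n := by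
        have heq : ((start : ℕ) : ℤ) + A - n = (((ytil : ℤ) + A) - n) + N₁ * B := by
          rw [hstart]; push_cast; ring
        rw [heq]
        exact dvd_add h5 ((dvd_refl ((B : ℕ) : ℤ)).mul_left (N₁ : ℤ))
      have h6 : |((start : ℕ) : ℤ) + A - n| < ((B : ℕ) : ℤ) := by
        rw [abs_lt]
        constructor <;> push_cast <;> omega
      have h7 := Int.eq_zero_of_abs_lt_dvd h5' h6
      omega
    · rintro rfl i
      rw [modEq_pow_iff (heLt i)]
      have hq : (b i : ℤ) ^ (τ i * k i) ∣ ((B : ℕ) : ℤ) := by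
        rw [hBz]; exact Finset.dvd_prod_of_mem _ (Finset.mem_univ i)
      have h1 : ((start + A : ℕ) : ℤ) ≡ ((ytil : ℤ) + A) [ZMOD (b i : ℤ) ^ (τ i * k i)] := by
        refine Int.modEq_iff_dvd.mpr ?_
        have heq : ((ytil : ℤ) + A) - ((start + A : ℕ) : ℤ) = -(N₁ * B) := by
          rw [hstart]; push_cast; ring
        rw [heq, dvd_neg]
        exact Dvd.dvd.mul_left hq (N₁ : ℤ)
      exact h1.trans (key i)
  -- step 8: compute the sum
  have hterm : ∀ n ∈ Finset.Ico start (start + N₂),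
      (Set.univ.pi (fun i =>
          Set.Ico ((∑ j ∈ Finset.Icc 1 (k i), ((b i : ℝ) ^ (j * τ i))⁻¹)
              - ((b i : ℝ) ^ (τ i * k i))⁻¹)
            (∑ j ∈ Finset.Icc 1 (k i), ((b i : ℝ) ^ (j * τ i))⁻¹))).indicator
          (fun _ => (1 : ℝ)) (fun i => radInv (b i) n)
        = if n = start + A then (1 : ℝ) else 0 := by
    intro n hn
    have hiff := (hcond n).trans (hchar n hn)
    rw [Set.indicator_apply]
    by_cases hcase : n = start + A
    · rw [if_pos (hiff.mpr hcase), if_pos hcase]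
    · rw [if_neg (fun hx => hcase (hiff.mp hx)), if_neg hcase]
  rw [Finset.sum_sub_distrib]
  rw [Finset.sum_congr rfl hterm]
  rw [Finset.sum_ite_eq' _ (start + A) (fun _ => (1 : ℝ))]
  rw [Finset.sum_const, Nat.card_Ico, Nat.add_sub_cancel_left, nsmul_eq_mul]
  have hmem : (start + A ∈ Finset.Ico start (start + N₂)) ↔ A < N₂ := by
    rw [Finset.mem_Ico]; omega
  rw [if_congr hmem rfl rfl]
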